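/- arXiv:2604.02803 — 3 statements merged into one kernel-verified Lean document; each statement's English description precedes it below -/
import Mathlib

section
/- Let C be a bounded closed curve in ℂ and χ analytic in an open neighborhood of C. Then the function P(x) = (1/(2πi)) ∫_C χ(s) x^{−s} ds, defined for x > 0 with x^{−s} = exp(−s log x), is differentiable on (0,∞), and there exists c > 0 such that P(x) = O(x^{−c}) as x → 0⁺ and P(x) = O(x^c) as x → ∞. -/
open Asymptotics

/-- Bochner's lemma: a contour integral P(x) = (1/2πi)∫_C χ(s)x^{−s}ds over a bounded closed
curve is differentiable on (0,∞) with polynomial growth bounds at 0 and ∞. -/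
theorem stmt_4 (γ : ℝ → ℂ) (hγ : ContDiff ℝ 1 γ) (hclosed : γ 1 = γ 0)
    (U : Set ℂ) (hU : IsOpen U) (hγU : ∀ t ∈ Set.Icc (0 : ℝ) 1, γ t ∈ U)
    (χ : ℂ → ℂ) (hχ : DifferentiableOn ℂ χ U)
    (P : ℝ → ℂ)
    (hP : P = fun x : ℝ => (1 / (2 * Real.pi * Complex.I)) *
      ∫ t in (0 : ℝ)..1,
        χ (γ t) * Complex.exp (-(γ t) * (Real.log x : ℂ)) * deriv γ t) :
    DifferentiableOn ℝ P (Set.Ioi 0) ∧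
    ∃ c > (0 : ℝ),
      (P =O[nhdsWithin 0 (Set.Ioi 0)] fun x : ℝ => x ^ (-c)) ∧
      (P =O[Filter.atTop] fun x : ℝ => x ^ c) := by
  -- continuity facts
  have hγc : Continuous γ := hγ.continuous
  have hγ' : Continuous (deriv γ) := hγ.continuous_deriv le_rfl
  have hχγ : ContinuousOn (fun t => χ (γ t)) (Set.Icc (0:ℝ) 1) :=
    (hχ.continuousOn.comp hγc.continuousOn hγU)
  have hfd : ContinuousOn (fun t => χ (γ t) * deriv γ t) (Set.Icc (0:ℝ) 1) :=
    hχγ.mul hγ'.continuousOn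
  -- bounds
  obtain ⟨M₀, hM₀⟩ := (isCompact_Icc (a := (0:ℝ)) (b := 1)).exists_bound_of_continuousOn hfd
  obtain ⟨R₀, hR₀⟩ := (isCompact_Icc (a := (0:ℝ)) (b := 1)).exists_bound_of_continuousOn
    hγc.continuousOn
  set M : ℝ := max M₀ 0 with hMdef
  set R : ℝ := max R₀ 0 with hRdef
  have hM : ∀ t ∈ Set.Icc (0:ℝ) 1, ‖χ (γ t) * deriv γ t‖ ≤ M :=
    fun t ht => (hM₀ t ht).trans (le_max_left _ _)
  have hR : ∀ t ∈ Set.Icc (0:ℝ) 1, ‖γ t‖ ≤ R :=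
    fun t ht => (hR₀ t ht).trans (le_max_left _ _)
  have hM0 : 0 ≤ M := le_max_right _ _
  have hR0 : 0 ≤ R := le_max_right _ _
  -- the real part estimate
  have hre : ∀ t ∈ Set.Icc (0:ℝ) 1, ∀ x : ℝ,
      (-(γ t) * (Real.log x : ℂ)).re ≤ R * |Real.log x| := by
    intro t ht x
    have h1 : (-(γ t) * (Real.log x : ℂ)).re = -(γ t).re * Real.log x := by
      simp [Complex.mul_re]
    rw [h1]
    calc -(γ t).re * Real.log x ≤ |(-(γ t).re) * Real.log x| := le_abs_self _
      _ = |(γ t).re| * |Real.log x| := by rw [abs_mul, abs_neg]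
      _ ≤ R * |Real.log x| := by
          apply mul_le_mul_of_nonneg_right _ (abs_nonneg _)
          exact (Complex.abs_re_le_norm _).trans (hR t ht)
  -- pointwise bound on the integrand
  have hptw : ∀ t ∈ Set.Icc (0:ℝ) 1, ∀ x : ℝ,
      ‖χ (γ t) * Complex.exp (-(γ t) * (Real.log x : ℂ)) * deriv γ t‖ ≤
        M * Real.exp (R * |Real.log x|) := by
    intro t ht x
    have h1 : ‖χ (γ t) * Complex.exp (-(γ t) * (Real.log x : ℂ)) * deriv γ t‖ =
        ‖χ (γ t) * deriv γ t‖ * Real.exp ((-(γ t) * (Real.log x : ℂ)).re) := by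
      rw [norm_mul, norm_mul, norm_mul, Complex.norm_exp]
      ring
    rw [h1]
    have := hre t ht x
    gcongr
    exact hM t ht
  -- norm of the constant
  have hc0 : ‖(1 / (2 * (Real.pi:ℂ) * Complex.I))‖ ≤ 1 := by
    have h1 : ‖(1 / (2 * (Real.pi:ℂ) * Complex.I))‖ = (2*Real.pi)⁻¹ := by
      simp [abs_of_pos Real.pi_pos]
    rw [h1]
    have : (1:ℝ) ≤ 2*Real.pi := by nlinarith [Real.pi_gt_three]
    exact inv_le_one_of_one_le₀ this
  -- key global bound
  have key : ∀ x : ℝ, ‖P x‖ ≤ M * Real.exp (R * |Real.log x|) := by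
    intro x
    rw [hP]
    have hInt : ‖∫ t in (0:ℝ)..1,
        χ (γ t) * Complex.exp (-(γ t) * (Real.log x : ℂ)) * deriv γ t‖ ≤
        M * Real.exp (R * |Real.log x|) * |1 - 0| := by
      apply intervalIntegral.norm_integral_le_of_norm_le_const
      intro t ht
      have ht' : t ∈ Set.Icc (0:ℝ) 1 := by
        rw [Set.uIoc_of_le (zero_le_one)] at ht
        exact Set.mem_Icc_of_Ioc ht
      exact hptw t ht' x
    simp only [sub_zero, abs_one, mul_one] at hInt
    calc ‖(1 / (2 * (Real.pi:ℂ) * Complex.I)) * _‖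
        = ‖(1 / (2 * (Real.pi:ℂ) * Complex.I))‖ * ‖_‖ := norm_mul _ _
      _ ≤ 1 * (M * Real.exp (R * |Real.log x|)) :=
          mul_le_mul hc0 hInt (norm_nonneg _) zero_le_one
      _ = M * Real.exp (R * |Real.log x|) := one_mul _
  -- continuity of the integrand in t, for each fixed x
  have hcont : ∀ x : ℝ, ContinuousOn
      (fun t => χ (γ t) * Complex.exp (-(γ t) * (Real.log x : ℂ)) * deriv γ t)
      (Set.Icc (0:ℝ) 1) := fun x =>
    (hχγ.mul (Complex.continuous_exp.comp
      (hγc.neg.mul continuous_const)).continuousOn).mul hγ'.continuousOn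
  have hmeas : ∀ x : ℝ, MeasureTheory.AEStronglyMeasurable
      (fun t => χ (γ t) * Complex.exp (-(γ t) * (Real.log x : ℂ)) * deriv γ t)
      (MeasureTheory.volume.restrict (Set.uIoc (0:ℝ) 1)) := by
    intro x
    rw [Set.uIoc_of_le (zero_le_one)]
    exact ((hcont x).mono Set.Ioc_subset_Icc_self).aestronglyMeasurable measurableSet_Ioc
  have hintg : ∀ x : ℝ, IntervalIntegrable
      (fun t => χ (γ t) * Complex.exp (-(γ t) * (Real.log x : ℂ)) * deriv γ t)
      MeasureTheory.volume (0:ℝ) 1 := fun x =>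
    ((hcont x).mono (by rw [Set.uIcc_of_le (zero_le_one)])).intervalIntegrable
  -- differentiability
  have hdiff : DifferentiableOn ℝ P (Set.Ioi 0) := by
    intro x₀ hx₀
    rw [Set.mem_Ioi] at hx₀
    set ε : ℝ := x₀ / 2 with hεdef
    have hε : 0 < ε := by positivity
    -- range of x in the ball
    have hball : ∀ x ∈ Metric.ball x₀ ε, x₀/2 < x ∧ x < x₀ + x₀/2 := by
      intro x hx
      rw [Metric.mem_ball, Real.dist_eq, abs_sub_lt_iff] at hx
      constructor <;> linarith [hx.1, hx.2]
    set L : ℝ := |Real.log (x₀/2)| + |Real.log (x₀ + x₀/2)| with hLdef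
    have hL : ∀ x ∈ Metric.ball x₀ ε, |Real.log x| ≤ L := by
      intro x hx
      obtain ⟨h1, h2⟩ := hball x hx
      have hx0 : (0:ℝ) < x := lt_trans (by positivity) h1
      rw [abs_le]
      constructor
      · have : Real.log (x₀/2) ≤ Real.log x := Real.log_le_log (by positivity) h1.le
        have h3 : -|Real.log (x₀/2)| ≤ Real.log (x₀/2) := neg_abs_le _
        have h4 : (0:ℝ) ≤ |Real.log (x₀ + x₀/2)| := abs_nonneg _
        simp only [hLdef]; linarith
      · have : Real.log x ≤ Real.log (x₀ + x₀/2) := Real.log_le_log hx0 h2.le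
        have h3 : Real.log (x₀ + x₀/2) ≤ |Real.log (x₀ + x₀/2)| := le_abs_self _
        have h4 : (0:ℝ) ≤ |Real.log (x₀/2)| := abs_nonneg _
        simp only [hLdef]; linarith
    -- the derivative integrand
    set F' : ℝ → ℝ → ℂ := fun x t =>
      χ (γ t) * (Complex.exp (-(γ t) * (Real.log x : ℂ)) * (-(γ t) * ((x:ℂ))⁻¹)) * deriv γ t
      with hF'def
    have hF'cont : ContinuousOn (F' x₀) (Set.Icc (0:ℝ) 1) := by
      apply ContinuousOn.mul _ hγ'.continuousOn
      apply hχγ.mul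
      apply Continuous.continuousOn
      exact (Complex.continuous_exp.comp (hγc.neg.mul continuous_const)).mul
        (hγc.neg.mul continuous_const)
    have hF'bound : ∀ t ∈ Set.Icc (0:ℝ) 1, ∀ x ∈ Metric.ball x₀ ε,
        ‖F' x t‖ ≤ M * (Real.exp (R * L) * (R * (x₀/2)⁻¹)) := by
      intro t ht x hx
      obtain ⟨h1, h2⟩ := hball x hx
      have hx0 : (0:ℝ) < x := lt_trans (by positivity) h1
      have heq : ‖F' x t‖ = ‖χ (γ t) * deriv γ t‖ *
          (Real.exp ((-(γ t) * (Real.log x : ℂ)).re) * (‖γ t‖ * ‖((x:ℂ))⁻¹‖)) := by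
        simp only [hF'def, norm_mul, norm_neg, norm_inv,
          Complex.norm_exp]
        ring
      rw [heq]
      have hxinv : ‖((x:ℂ))⁻¹‖ ≤ (x₀/2)⁻¹ := by
        rw [norm_inv, Complex.norm_real, Real.norm_eq_abs, abs_of_pos hx0]
        exact inv_anti₀ (by positivity) h1.le
      have hre' : (-(γ t) * (Real.log x : ℂ)).re ≤ R * L := by
        calc (-(γ t) * (Real.log x : ℂ)).re ≤ R * |Real.log x| := hre t ht x
          _ ≤ R * L := mul_le_mul_of_nonneg_left (hL x hx) hR0
      gcongr
      · exact hM t ht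
      · exact hR t ht
    have hF'deriv : ∀ t ∈ Set.Icc (0:ℝ) 1, ∀ x ∈ Metric.ball x₀ ε,
        HasDerivAt (fun x : ℝ =>
          χ (γ t) * Complex.exp (-(γ t) * (Real.log x : ℂ)) * deriv γ t) (F' x t) x := by
      intro t ht x hx
      obtain ⟨h1, _⟩ := hball x hx
      have hx0 : (0:ℝ) < x := lt_trans (by positivity) h1
      have hlog : HasDerivAt Real.log x⁻¹ x := Real.hasDerivAt_log hx0.ne'
      have hlogC : HasDerivAt (fun x : ℝ => ((Real.log x : ℂ))) ((x⁻¹ : ℝ) : ℂ) x :=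
        hlog.ofReal_comp
      have hmul : HasDerivAt (fun x : ℝ => -(γ t) * ((Real.log x : ℂ)))
          (-(γ t) * ((x⁻¹ : ℝ) : ℂ)) x := hlogC.const_mul _
      have hexp := hmul.cexp
      have := (hexp.const_mul (χ (γ t))).mul_const (deriv γ t)
      convert this using 1
      · rfl
      simp only [hF'def]
      push_cast
      ring
    obtain ⟨_, hD⟩ := intervalIntegral.hasDerivAt_integral_of_dominated_loc_of_deriv_le
      (F := fun x t => χ (γ t) * Complex.exp (-(γ t) * (Real.log x : ℂ)) * deriv γ t)
      (F' := F') (x₀ := x₀)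
      (bound := fun _ => M * (Real.exp (R * L) * (R * (x₀/2)⁻¹))) (Metric.ball_mem_nhds x₀ hε)
      (Filter.Eventually.of_forall fun x => hmeas x)
      (hintg x₀)
      (by rw [Set.uIoc_of_le (zero_le_one)]
          exact (hF'cont.mono Set.Ioc_subset_Icc_self).aestronglyMeasurable measurableSet_Ioc)
      (by filter_upwards with t ht x hx
          refine hF'bound t ?_ x hx
          rw [Set.uIoc_of_le (zero_le_one)] at ht
          exact Set.mem_Icc_of_Ioc ht)
      intervalIntegrable_const
      (by filter_upwards with t ht x hx
          refine hF'deriv t ?_ x hx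
          rw [Set.uIoc_of_le (zero_le_one)] at ht
          exact Set.mem_Icc_of_Ioc ht)
    have : DifferentiableAt ℝ P x₀ := by
      rw [hP]
      exact (hD.const_mul (1 / (2 * (Real.pi:ℂ) * Complex.I))).differentiableAt
    exact this.differentiableWithinAt
  refine ⟨hdiff, R + 1, by positivity, ?_, ?_⟩
  · rw [isBigO_iff]
    refine ⟨M, ?_⟩
    filter_upwards [Ioo_mem_nhdsGT_of_mem (Set.left_mem_Ico.mpr zero_lt_one)] with x hx
    obtain ⟨hx0, hx1⟩ := hx
    have hlog : Real.log x ≤ 0 := Real.log_nonpos hx0.le hx1.le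
    have h1 : Real.exp (R * |Real.log x|) = x ^ (-R) := by
      rw [abs_of_nonpos hlog, Real.rpow_def_of_pos hx0]
      ring_nf
    have h2 : x ^ (-R) ≤ x ^ (-(R+1)) :=
      Real.rpow_le_rpow_of_exponent_ge hx0 hx1.le (by linarith)
    have h3 : ‖x ^ (-(R+1))‖ = x ^ (-(R+1)) := by
      rw [Real.norm_eq_abs, abs_of_pos (Real.rpow_pos_of_pos hx0 _)]
    calc ‖P x‖ ≤ M * Real.exp (R * |Real.log x|) := key x
      _ = M * x ^ (-R) := by rw [h1]
      _ ≤ M * x ^ (-(R+1)) := mul_le_mul_of_nonneg_left h2 hM0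
      _ = M * ‖x ^ (-(R+1))‖ := by rw [h3]
  · rw [isBigO_iff]
    refine ⟨M, ?_⟩
    filter_upwards [Filter.eventually_ge_atTop (1:ℝ)] with x hx1
    have hx0 : (0:ℝ) < x := lt_of_lt_of_le zero_lt_one hx1
    have hlog : 0 ≤ Real.log x := Real.log_nonneg hx1
    have h1 : Real.exp (R * |Real.log x|) = x ^ R := by
      rw [abs_of_nonneg hlog, Real.rpow_def_of_pos hx0]
      ring_nf
    have h2 : x ^ R ≤ x ^ (R+1) :=
      Real.rpow_le_rpow_of_exponent_le hx1 (by linarith)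
    have h3 : ‖x ^ (R+1)‖ = x ^ (R+1) := by
      rw [Real.norm_eq_abs, abs_of_pos (Real.rpow_pos_of_pos hx0 _)]
    calc ‖P x‖ ≤ M * Real.exp (R * |Real.log x|) := key x
      _ = M * x ^ R := by rw [h1]
      _ ≤ M * x ^ (R+1) := mul_le_mul_of_nonneg_left h2 hM0
      _ = M * ‖x ^ (R+1)‖ := by rw [h3]
end

section
/- With notation as in the previous item and additionally Y_{α,β}(x) = (1/(2πi)) ∫_{(a)} Γ(s) ∏_{i=1}^r Γ(α_i s + β_i) x^{−s} ds, there exists c > 0 such that Y_{α,β}(x) ≪ exp(−c x^{1/(1+d')}) as x → ∞, where d' = ∑_{i=1}^r α_i. -/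
open Complex MeasureTheory Set
set_option maxHeartbeats 1000000

lemma norm_cGamma_le {s : ℂ} (hs : 0 < s.re) : ‖Complex.Gamma s‖ ≤ Real.Gamma s.re := by
  rw [Complex.Gamma_eq_integral hs, Real.Gamma_eq_integral hs]
  rw [Complex.GammaIntegral]
  refine (norm_integral_le_of_norm_le (Real.GammaIntegral_convergent hs) ?_).trans le_rfl
  filter_upwards [ae_restrict_mem measurableSet_Ioi] with x (hx : 0 < x)
  simp [Complex.norm_real, Complex.norm_cpow_eq_rpow_re_of_pos hx,
    Complex.sub_re, Complex.one_re, Complex.norm_exp, Complex.neg_re, Complex.ofReal_re]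

lemma norm_cGamma_le' {s : ℂ} (hs : 0 < s.re) :
    ‖Complex.Gamma s‖ ≤ (Real.Gamma s.re + Real.Gamma (s.re + 2)) / max 1 (s.im ^ 2) := by
  have hpos : 0 < Real.Gamma s.re := Real.Gamma_pos_of_pos hs
  have hpos2 : 0 < Real.Gamma (s.re + 2) := Real.Gamma_pos_of_pos (by linarith)
  rcases le_or_gt (s.im ^ 2) 1 with h | h
  · rw [max_eq_left h, div_one]
    exact (norm_cGamma_le hs).trans (by linarith)
  · rw [max_eq_right h.le]
    have him : s.im ≠ 0 := by
      intro h0; rw [h0] at h; norm_num at h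
    have hs0 : s ≠ 0 := fun h0 => him (by simp [h0])
    have hs1 : s + 1 ≠ 0 := fun h0 => him (by
      have := congrArg Complex.im h0; simpa using this)
    have key : Complex.Gamma (s + 2) = (s + 1) * s * Complex.Gamma s := by
      have h1 : Complex.Gamma (s + 1) = s * Complex.Gamma s := Complex.Gamma_add_one s hs0
      have h2 : Complex.Gamma (s + 1 + 1) = (s + 1) * Complex.Gamma (s + 1) :=
        Complex.Gamma_add_one (s + 1) hs1
      rw [show s + 2 = s + 1 + 1 by ring, h2, h1]; ring
    have hG : Complex.Gamma s = Complex.Gamma (s + 2) / ((s + 1) * s) := by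
      rw [key]; field_simp
    rw [hG, norm_div, norm_mul]
    have hb : ‖Complex.Gamma (s + 2)‖ ≤ Real.Gamma (s.re + 2) := by
      have h2re : 0 < (s + 2).re := by simp [Complex.add_re]; linarith
      have := norm_cGamma_le h2re
      simpa using this
    have hl1 : |s.im| ≤ ‖s‖ := Complex.abs_im_le_norm s
    have hl2 : |s.im| ≤ ‖s + 1‖ := by
      have : |(s + 1).im| ≤ ‖s + 1‖ := Complex.abs_im_le_norm (s + 1)
      simpa using this
    have him2 : 0 < |s.im| := abs_pos.mpr him
    have hdenom : s.im ^ 2 ≤ ‖s + 1‖ * ‖s‖ := by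
      have h0 : s.im ^ 2 = |s.im| * |s.im| := by rw [← _root_.sq_abs]; ring
      rw [h0]
      exact mul_le_mul hl2 hl1 him2.le (norm_nonneg _)
    have h2pos : (0:ℝ) < s.im ^ 2 := by positivity
    calc ‖Complex.Gamma (s + 2)‖ / (‖s + 1‖ * ‖s‖)
        ≤ Real.Gamma (s.re + 2) / (s.im ^ 2) := by
          apply div_le_div₀ hpos2.le hb h2pos hdenom
      _ ≤ (Real.Gamma s.re + Real.Gamma (s.re + 2)) / s.im ^ 2 := by
          gcongr; linarith

lemma ne_neg_nat {s : ℂ} (hs : 0 < s.re) (m : ℕ) : s ≠ -m := by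
  intro h
  rw [h] at hs
  simp only [Complex.neg_re, Complex.natCast_re] at hs
  have : (0:ℝ) ≤ m := Nat.cast_nonneg m
  linarith

lemma inv_max_le (t : ℝ) : (max 1 (t^2))⁻¹ ≤ 2 * (1 + t^2)⁻¹ := by
  rw [inv_le_iff_one_le_mul₀ (by positivity)]
  have h1 : 1 + t^2 ≤ 2 * max 1 (t^2) := by
    rcases le_total 1 (t^2) with h | h
    · rw [max_eq_right h]; linarith
    · rw [max_eq_left h]; linarith
  calc (1:ℝ) = (1 + t^2) * (1 + t^2)⁻¹ := by field_simp
    _ ≤ (2 * max 1 (t^2)) * (1 + t^2)⁻¹ := by gcongr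
    _ = 2 * (1 + t^2)⁻¹ * max 1 (t^2) := by ring

lemma integrable_inv_max : MeasureTheory.Integrable (fun t : ℝ => (max 1 (t^2))⁻¹) := by
  refine ((integrable_inv_one_add_sq).const_mul 2).mono' ?_ ?_
  · apply Continuous.aestronglyMeasurable
    have : Continuous fun t : ℝ => max 1 (t^2) := continuous_const.max (by continuity)
    exact this.inv₀ (fun t => by positivity)
  · filter_upwards with t
    rw [Real.norm_eq_abs, abs_of_pos (by positivity)]
    exact inv_max_le t

lemma integral_inv_max_le : ∫ t : ℝ, (max 1 (t^2))⁻¹ ≤ 2 * Real.pi := by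
  have h := MeasureTheory.integral_mono integrable_inv_max
    ((integrable_inv_one_add_sq).const_mul 2) inv_max_le
  rwa [MeasureTheory.integral_const_mul, integral_univ_inv_one_add_sq] at h

section Fsec
variable {r : ℕ} (α : Fin r → ℝ) (β : Fin r → ℂ)

noncomputable def Ff (x : ℝ) (s : ℂ) : ℂ :=
  Complex.Gamma s * (∏ i, Complex.Gamma ((α i : ℂ) * s + β i)) * (x : ℂ) ^ (-s)

noncomputable def Bb (x σ : ℝ) : ℝ :=
  (Real.Gamma σ + Real.Gamma (σ + 2)) * (∏ i, Real.Gamma (α i * σ + (β i).re)) * x ^ (-σ)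

variable (hα : ∀ i, 0 < α i) (hβ : ∀ i, 0 ≤ (β i).re)

include hα hβ in
lemma Ff_norm_le {x σ : ℝ} (hx : 0 < x) (hσ : 0 < σ) (t : ℝ) :
    ‖Ff α β x (↑σ + ↑t * Complex.I)‖ ≤ Bb α β x σ * (max 1 (t ^ 2))⁻¹ := by
  set s : ℂ := ↑σ + ↑t * Complex.I with hs
  have hre : s.re = σ := by simp [hs]
  have him : s.im = t := by simp [hs]
  have h1 : ‖Complex.Gamma s‖ ≤ (Real.Gamma σ + Real.Gamma (σ + 2)) / max 1 (t ^ 2) := by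
    have := norm_cGamma_le' (s := s) (by rw [hre]; exact hσ)
    rwa [hre, him] at this
  have h2 : ‖∏ i, Complex.Gamma ((α i : ℂ) * s + β i)‖ ≤
      ∏ i, Real.Gamma (α i * σ + (β i).re) := by
    rw [norm_prod]
    refine Finset.prod_le_prod (fun i _ => norm_nonneg _) (fun i _ => ?_)
    have hrei : ((α i : ℂ) * s + β i).re = α i * σ + (β i).re := by
      simp [hs, Complex.add_re, Complex.mul_re]
    have hp : 0 < ((α i : ℂ) * s + β i).re := by
      rw [hrei]; have := hα i; have := hβ i; positivity
    have := norm_cGamma_le hp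
    rwa [hrei] at this
  have h3 : ‖(x : ℂ) ^ (-s)‖ = x ^ (-σ) := by
    rw [Complex.norm_cpow_eq_rpow_re_of_pos hx, Complex.neg_re, hre]
  have hnn2 : (0:ℝ) ≤ ∏ i, Real.Gamma (α i * σ + (β i).re) :=
    Finset.prod_nonneg fun i _ => (Real.Gamma_pos_of_pos (by have := hα i; have := hβ i; positivity)).le
  have hxp : (0:ℝ) ≤ x ^ (-σ) := Real.rpow_nonneg hx.le _
  calc ‖Ff α β x s‖ = ‖Complex.Gamma s‖ * ‖∏ i, Complex.Gamma ((α i : ℂ) * s + β i)‖ *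
        ‖(x : ℂ) ^ (-s)‖ := by rw [Ff, norm_mul, norm_mul]
    _ ≤ ((Real.Gamma σ + Real.Gamma (σ + 2)) / max 1 (t ^ 2)) *
        (∏ i, Real.Gamma (α i * σ + (β i).re)) * (x ^ (-σ)) := by
        rw [h3]
        refine mul_le_mul_of_nonneg_right ?_ hxp
        exact mul_le_mul h1 h2 (norm_nonneg _) (by positivity)
    _ = Bb α β x σ * (max 1 (t ^ 2))⁻¹ := by rw [Bb]; ring

include hα hβ in
lemma Ff_continuous {x σ : ℝ} (hx : 0 < x) (hσ : 0 < σ) :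
    Continuous (fun t : ℝ => Ff α β x (↑σ + ↑t * Complex.I)) := by
  have hsc : Continuous (fun t : ℝ => (↑σ + ↑t * Complex.I : ℂ)) := by
    apply continuous_const.add
    exact (Complex.continuous_ofReal).mul continuous_const
  have hre : ∀ t : ℝ, (↑σ + ↑t * Complex.I : ℂ).re = σ := by intro t; simp
  refine ((Continuous.mul ?_ ?_).mul ?_)
  · rw [continuous_iff_continuousAt]
    intro t
    refine (Complex.differentiableAt_Gamma _ ?_).continuousAt.comp hsc.continuousAt
    intro m
    exact ne_neg_nat (by rw [hre t]; exact hσ) m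
  · apply continuous_finset_prod
    intro i _
    rw [continuous_iff_continuousAt]
    intro t
    have hc2 : Continuous (fun t : ℝ => (α i : ℂ) * (↑σ + ↑t * Complex.I) + β i) :=
      (continuous_const.mul hsc).add continuous_const
    refine (Complex.differentiableAt_Gamma _ ?_).continuousAt.comp hc2.continuousAt
    intro m
    refine ne_neg_nat ?_ m
    have : ((α i : ℂ) * (↑σ + ↑t * Complex.I) + β i).re = α i * σ + (β i).re := by
      simp [Complex.add_re, Complex.mul_re]
    rw [this]
    have := hα i; have := hβ i; positivity
  · refine Continuous.const_cpow ?_ ?_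
    · exact hsc.neg
    · left; exact_mod_cast hx.ne'

include hα hβ in
lemma Ff_integrable {x σ : ℝ} (hx : 0 < x) (hσ : 0 < σ) :
    MeasureTheory.Integrable (fun t : ℝ => Ff α β x (↑σ + ↑t * Complex.I)) := by
  refine (integrable_inv_max.const_mul (Bb α β x σ)).mono'
    ((Ff_continuous α β hα hβ hx hσ).aestronglyMeasurable) ?_
  filter_upwards with t
  exact Ff_norm_le α β hα hβ hx hσ t

include hα hβ in
lemma Ff_diffAt {x : ℝ} (hx : 0 < x) {s : ℂ} (hs : 0 < s.re) :
    DifferentiableAt ℂ (Ff α β x) s := by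
  refine DifferentiableAt.mul (DifferentiableAt.mul ?_ ?_) ?_
  · exact Complex.differentiableAt_Gamma s (fun m => ne_neg_nat hs m)
  · refine DifferentiableAt.fun_finsetProd (fun i _ => ?_)
    refine (Complex.differentiableAt_Gamma _ (fun m => ?_)).comp s
      ((differentiableAt_const _).mul differentiableAt_id |>.add (differentiableAt_const _))
    refine ne_neg_nat ?_ m
    have : ((α i : ℂ) * s + β i).re = α i * s.re + (β i).re := by
      simp [Complex.add_re, Complex.mul_re]
    rw [this]
    have := hα i; have := hβ i
    positivity
  · refine DifferentiableAt.const_cpow differentiableAt_id.neg ?_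
    left; exact_mod_cast hx.ne'

include hα hβ in
lemma Ff_shift {x A B : ℝ} (hx : 0 < x) (hA : 0 < A) (hAB : A ≤ B) :
    ∫ t : ℝ, Ff α β x (↑A + ↑t * Complex.I) = ∫ t : ℝ, Ff α β x (↑B + ↑t * Complex.I) := by
  have hB : 0 < B := lt_of_lt_of_le hA hAB
  -- boundedness of Bb on [A, B]
  obtain ⟨C, hC⟩ : ∃ C, ∀ σ ∈ Icc A B, Bb α β x σ ≤ C := by
    have hcont : ContinuousOn (fun σ : ℝ => Bb α β x σ) (Icc A B) := by
      have h1 : ContinuousOn (fun σ : ℝ => Real.Gamma σ) (Icc A B) := by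
        intro σ hσ
        exact (Real.differentiableAt_Gamma (fun m => by
          have : 0 < σ := lt_of_lt_of_le hA hσ.1
          intro h; rw [h] at this; have : (0:ℝ) ≤ m := Nat.cast_nonneg m; linarith)).continuousAt.continuousWithinAt
      have h2 : ContinuousOn (fun σ : ℝ => Real.Gamma (σ + 2)) (Icc A B) := by
        intro σ hσ
        refine ((Real.differentiableAt_Gamma (fun m => by
          have : 0 < σ := lt_of_lt_of_le hA hσ.1
          intro h; have : (0:ℝ) ≤ m := Nat.cast_nonneg m; linarith)).continuousAt.comp
          (by fun_prop)).continuousWithinAt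
      have h3 : ContinuousOn (fun σ : ℝ => ∏ i, Real.Gamma (α i * σ + (β i).re)) (Icc A B) := by
        apply continuousOn_finset_prod
        intro i _
        intro σ hσ
        refine ((Real.differentiableAt_Gamma (fun m => by
          have h0 : 0 < σ := lt_of_lt_of_le hA hσ.1
          have := hα i; have := hβ i
          have hpos : 0 < α i * σ + (β i).re := by positivity
          intro h; have : (0:ℝ) ≤ m := Nat.cast_nonneg m; linarith)).continuousAt.comp
          (by fun_prop)).continuousWithinAt
      have h4 : ContinuousOn (fun σ : ℝ => x ^ (-σ)) (Icc A B) := by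
        have he : (fun σ : ℝ => x ^ (-σ)) = fun σ => Real.exp (Real.log x * (-σ)) :=
          funext fun σ => Real.rpow_def_of_pos hx _
        rw [he]
        exact (Real.continuous_exp.comp (continuous_const.mul continuous_neg)).continuousOn
      exact ((h1.add h2).mul h3).mul h4
    obtain ⟨C, hC⟩ := (isCompact_Icc).exists_bound_of_continuousOn hcont
    exact ⟨C, fun σ hσ => (le_abs_self _).trans ((Real.norm_eq_abs _) ▸ hC σ hσ)⟩
  have hCnn : 0 ≤ C := by
    have h0 := hC A (left_mem_Icc.mpr hAB)
    have : 0 < Bb α β x A := by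
      rw [Bb]
      have g1 : 0 < Real.Gamma A := Real.Gamma_pos_of_pos hA
      have g2 : 0 < Real.Gamma (A + 2) := Real.Gamma_pos_of_pos (by linarith)
      have g3 : 0 < ∏ i, Real.Gamma (α i * A + (β i).re) :=
        Finset.prod_pos fun i _ => Real.Gamma_pos_of_pos (by have := hα i; have := hβ i; positivity)
      have g4 : 0 < x ^ (-A) := Real.rpow_pos_of_pos hx _
      positivity
    linarith
  -- rectangle identity for each T
  have rect : ∀ T : ℝ,
      (∫ σ in A..B, Ff α β x (↑σ + ↑(-T) * Complex.I))
        - (∫ σ in A..B, Ff α β x (↑σ + ↑T * Complex.I))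
        + Complex.I • (∫ t in (-T)..T, Ff α β x (↑B + ↑t * Complex.I))
        - Complex.I • (∫ t in (-T)..T, Ff α β x (↑A + ↑t * Complex.I)) = 0 := by
    intro T
    have h := Complex.integral_boundary_rect_eq_zero_of_differentiableOn (Ff α β x)
      (⟨A, -T⟩ : ℂ) (⟨B, T⟩ : ℂ) ?_
    · convert h using 3 <;> norm_num
    · intro s hs
      rw [mem_reProdIm] at hs
      have hre : A ≤ s.re := by
        have := hs.1
        rw [show ((⟨A, -T⟩ : ℂ)).re = A from rfl, show ((⟨B, T⟩ : ℂ)).re = B from rfl,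
          uIcc_of_le hAB] at this
        exact this.1
      exact (Ff_diffAt α β hα hβ hx (lt_of_lt_of_le hA hre)).differentiableWithinAt
  -- horizontal integrals tend to zero
  have horiz : ∀ t0 : ℝ, 1 ≤ |t0| →
      ‖∫ σ in A..B, Ff α β x (↑σ + ↑t0 * Complex.I)‖ ≤ C * (t0 ^ 2)⁻¹ * |B - A| := by
    intro t0 ht0
    refine intervalIntegral.norm_integral_le_of_norm_le_const ?_
    intro σ hσ
    rw [uIoc_of_le hAB] at hσ
    have hσ' : σ ∈ Icc A B := ⟨hσ.1.le, hσ.2⟩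
    have h1 := Ff_norm_le α β hα hβ hx (lt_of_lt_of_le hA hσ'.1) t0
    have h2 : (max 1 (t0 ^ 2))⁻¹ = (t0 ^ 2)⁻¹ := by
      rw [max_eq_right]
      calc (1:ℝ) = 1 ^ 2 := by norm_num
        _ ≤ |t0| ^ 2 := by gcongr
        _ = t0 ^ 2 := sq_abs t0
    rw [h2] at h1
    refine h1.trans ?_
    have ht2 : (0:ℝ) ≤ (t0 ^ 2)⁻¹ := by positivity
    exact mul_le_mul_of_nonneg_right (hC σ hσ') ht2
  have hsq : Filter.Tendsto (fun T : ℝ => C * (T ^ 2)⁻¹ * |B - A|) Filter.atTop (nhds 0) := by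
    have : Filter.Tendsto (fun T : ℝ => (T ^ 2)⁻¹) Filter.atTop (nhds 0) :=
      (Filter.tendsto_pow_atTop (two_ne_zero)).inv_tendsto_atTop
    simpa using ((this.const_mul C).mul_const |B - A|)
  have htop : Filter.Tendsto (fun T : ℝ => ∫ σ in A..B, Ff α β x (↑σ + ↑T * Complex.I))
      Filter.atTop (nhds 0) := by
    apply squeeze_zero_norm' ?_ hsq
    filter_upwards [Filter.eventually_ge_atTop (1:ℝ)] with T hT
    exact horiz T (by rwa [_root_.abs_of_nonneg (by linarith : (0:ℝ) ≤ T)])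
  have hbot : Filter.Tendsto (fun T : ℝ => ∫ σ in A..B, Ff α β x (↑σ + ↑(-T) * Complex.I))
      Filter.atTop (nhds 0) := by
    apply squeeze_zero_norm' ?_ hsq
    filter_upwards [Filter.eventually_ge_atTop (1:ℝ)] with T hT
    have := horiz (-T) (by rw [abs_neg, _root_.abs_of_nonneg (by linarith : (0:ℝ) ≤ T)]; exact hT)
    simpa using this
  have hIA : Filter.Tendsto (fun T : ℝ => ∫ t in (-T)..T, Ff α β x (↑A + ↑t * Complex.I))
      Filter.atTop (nhds (∫ t : ℝ, Ff α β x (↑A + ↑t * Complex.I))) :=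
    intervalIntegral_tendsto_integral (Ff_integrable α β hα hβ hx hA)
      Filter.tendsto_neg_atTop_atBot Filter.tendsto_id
  have hIB : Filter.Tendsto (fun T : ℝ => ∫ t in (-T)..T, Ff α β x (↑B + ↑t * Complex.I))
      Filter.atTop (nhds (∫ t : ℝ, Ff α β x (↑B + ↑t * Complex.I))) :=
    intervalIntegral_tendsto_integral (Ff_integrable α β hα hβ hx hB)
      Filter.tendsto_neg_atTop_atBot Filter.tendsto_id
  have key : Filter.Tendsto (fun T : ℝ =>
      Complex.I • (∫ t in (-T)..T, Ff α β x (↑A + ↑t * Complex.I))) Filter.atTop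
      (nhds (Complex.I • (∫ t : ℝ, Ff α β x (↑A + ↑t * Complex.I)))) := hIA.const_smul _
  have key2 : Filter.Tendsto (fun T : ℝ =>
      Complex.I • (∫ t in (-T)..T, Ff α β x (↑A + ↑t * Complex.I))) Filter.atTop
      (nhds (Complex.I • (∫ t : ℝ, Ff α β x (↑B + ↑t * Complex.I)))) := by
    have heq : ∀ T : ℝ, Complex.I • (∫ t in (-T)..T, Ff α β x (↑A + ↑t * Complex.I)) =
        (∫ σ in A..B, Ff α β x (↑σ + ↑(-T) * Complex.I))
          - (∫ σ in A..B, Ff α β x (↑σ + ↑T * Complex.I))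
          + Complex.I • (∫ t in (-T)..T, Ff α β x (↑B + ↑t * Complex.I)) := by
      intro T
      have := rect T
      linear_combination -this
    rw [show (fun T : ℝ => Complex.I • (∫ t in (-T)..T, Ff α β x (↑A + ↑t * Complex.I)))
      = fun T : ℝ => (∫ σ in A..B, Ff α β x (↑σ + ↑(-T) * Complex.I))
          - (∫ σ in A..B, Ff α β x (↑σ + ↑T * Complex.I))
          + Complex.I • (∫ t in (-T)..T, Ff α β x (↑B + ↑t * Complex.I)) from funext heq]
    have := ((hbot.sub htop).add (hIB.const_smul Complex.I))
    simpa using this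
  have := tendsto_nhds_unique key key2
  have hinj := smul_right_injective ℂ Complex.I_ne_zero
  exact hinj this

include hα hβ in
lemma Bb_nonneg {x σ : ℝ} (hx : 0 < x) (hσ : 0 < σ) : 0 ≤ Bb α β x σ := by
  rw [Bb]
  have g1 : 0 < Real.Gamma σ := Real.Gamma_pos_of_pos hσ
  have g2 : 0 < Real.Gamma (σ + 2) := Real.Gamma_pos_of_pos (by linarith)
  have g3 : 0 ≤ ∏ i, Real.Gamma (α i * σ + (β i).re) :=
    Finset.prod_nonneg fun i _ =>
      (Real.Gamma_pos_of_pos (by have := hα i; have := hβ i; positivity)).le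
  have g4 : 0 ≤ x ^ (-σ) := (Real.rpow_pos_of_pos hx _).le
  positivity

end Fsec


lemma gammaUB {y : ℝ} (hy : 2 ≤ y) : Real.Gamma y ≤ Real.exp (y * Real.log y + 2 * y) := by
  have hy0 : (0:ℝ) < y := by linarith
  set n : ℕ := ⌈y⌉₊ with hn
  have hyn : y ≤ n := Nat.le_ceil y
  have hn2 : (2:ℝ) ≤ (n:ℝ) := le_trans hy hyn
  have hny : (n:ℝ) ≤ y + 1 := (Nat.ceil_lt_add_one hy0.le).le
  have h1 : Real.Gamma y ≤ Real.Gamma n :=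
    Real.Gamma_strictMonoOn_Ici.monotoneOn (mem_Ici.mpr hy) (mem_Ici.mpr hn2) hyn
  have hn1 : 1 ≤ n := by
    by_contra h
    push_neg at h
    interval_cases n <;> norm_num at hn2
  have h2 : Real.Gamma n = Nat.factorial (n - 1) := by
    have he : n - 1 + 1 = n := Nat.succ_pred_eq_of_pos hn1
    have : (n:ℝ) = ((n-1 : ℕ) : ℝ) + 1 := by
      rw [show ((n-1:ℕ):ℝ) + 1 = ((n - 1 + 1 : ℕ) : ℝ) by push_cast; ring, he]
    rw [this, Real.Gamma_nat_eq_factorial]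
  have h3 : (Nat.factorial (n-1) : ℝ) ≤ (n:ℝ) ^ (n:ℝ) := by
    have hle : Nat.factorial (n-1) ≤ n ^ n :=
      le_trans (Nat.factorial_le (Nat.sub_le n 1)) (Nat.factorial_le_pow n)
    calc (Nat.factorial (n-1) : ℝ) ≤ ((n ^ n : ℕ) : ℝ) := by exact_mod_cast hle
      _ = (n:ℝ) ^ (n:ℕ) := by push_cast; ring
      _ = (n:ℝ) ^ (n:ℝ) := by rw [Real.rpow_natCast]
  have h4 : (n:ℝ) ^ (n:ℝ) ≤ (y+1) ^ (y+1) := by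
    calc (n:ℝ) ^ (n:ℝ) ≤ (y+1) ^ (n:ℝ) := by
          apply Real.rpow_le_rpow (by positivity) hny (by positivity)
      _ ≤ (y+1) ^ (y+1) := Real.rpow_le_rpow_of_exponent_le (by linarith) hny
  have h5 : (y+1) ^ (y+1) = Real.exp ((y+1) * Real.log (y+1)) := by
    rw [Real.rpow_def_of_pos (by linarith)]; ring_nf
  have h6 : (y+1) * Real.log (y+1) ≤ y * Real.log y + 2 * y := by
    have hl1 : Real.log (y+1) ≤ Real.log y + 1 := by
      have : Real.log (y+1) - Real.log y = Real.log ((y+1)/y) := by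
        rw [Real.log_div (by linarith) (by linarith)]
      have h7 : Real.log ((y+1)/y) ≤ (y+1)/y - 1 := Real.log_le_sub_one_of_pos (by positivity)
      have h8 : (y+1)/y - 1 = 1/y := by field_simp; ring
      have h9 : (1:ℝ)/y ≤ 1 := by rw [div_le_one hy0]; linarith
      linarith
    have hl2 : Real.log y ≤ y - 1 := Real.log_le_sub_one_of_pos hy0
    have hl0 : 0 ≤ Real.log y := Real.log_nonneg (by linarith)
    nlinarith
  calc Real.Gamma y ≤ ((Nat.factorial (n-1) : ℝ)) := by rw [← h2]; exact h1
    _ ≤ (y+1)^(y+1) := le_trans h3 h4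
    _ ≤ Real.exp (y * Real.log y + 2 * y) := by rw [h5]; exact Real.exp_le_exp.mpr h6

lemma factor0 {A : ℝ} (hA : 2 ≤ A) :
    Real.Gamma A + Real.Gamma (A + 2) ≤ Real.exp (A * Real.log A + 10 * A) := by
  have hA0 : (0:ℝ) < A := by linarith
  have h1 : Real.Gamma A ≤ Real.Gamma (A + 2) :=
    Real.Gamma_strictMonoOn_Ici.monotoneOn (mem_Ici.mpr hA) (mem_Ici.mpr (by linarith))
      (by linarith)
  have h2 : Real.Gamma (A + 2) ≤ Real.exp ((A+2) * Real.log (A+2) + 2 * (A+2)) :=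
    gammaUB (by linarith)
  have hl1 : Real.log (A + 2) ≤ Real.log A + 1 := by
    have hd : Real.log (A+2) - Real.log A = Real.log ((A+2)/A) := by
      rw [Real.log_div (by linarith) (by linarith)]
    have h7 : Real.log ((A+2)/A) ≤ (A+2)/A - 1 := Real.log_le_sub_one_of_pos (by positivity)
    have h8 : (A+2)/A - 1 = 2/A := by field_simp; ring
    have h9 : (2:ℝ)/A ≤ 1 := by rw [div_le_one hA0]; linarith
    linarith
  have hl2 : Real.log A ≤ A - 1 := Real.log_le_sub_one_of_pos hA0
  have hl0 : 0 ≤ Real.log A := Real.log_nonneg (by linarith)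
  have key : (A+2) * Real.log (A+2) + 2*(A+2) + Real.log 2 ≤ A * Real.log A + 10 * A := by
    have hlog2 : Real.log 2 ≤ 1 := by
      have := Real.log_le_sub_one_of_pos (by norm_num : (0:ℝ) < 2); linarith
    nlinarith
  calc Real.Gamma A + Real.Gamma (A+2) ≤ 2 * Real.Gamma (A+2) := by linarith
    _ ≤ 2 * Real.exp ((A+2) * Real.log (A+2) + 2 * (A+2)) := by linarith [h2]
    _ = Real.exp ((A+2) * Real.log (A+2) + 2 * (A+2) + Real.log 2) := by
        rw [Real.exp_add ((A+2) * Real.log (A+2) + 2 * (A+2)) (Real.log 2),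
          Real.exp_log (by norm_num : (0:ℝ) < 2)]
        ring
    _ ≤ Real.exp (A * Real.log A + 10 * A) := Real.exp_le_exp.mpr key

lemma factori {a b A : ℝ} (ha : 0 < a) (hb : 0 ≤ b) (hA : 2 ≤ A)
    (hy : 2 ≤ a * A + b) :
    Real.Gamma (a * A + b) ≤
      Real.exp (a * (A * Real.log A) + (b + (a+b) * |Real.log (a+b)| + 2*(a+b)) * A) := by
  set y := a * A + b with hydef
  have hA0 : (0:ℝ) < A := by linarith
  have hy0 : (0:ℝ) < y := by linarith
  have hc : y ≤ (a+b) * A := by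
    have : b ≤ b * A := by nlinarith
    rw [hydef]; nlinarith
  have hcpos : 0 < a + b := by linarith
  have h1 : Real.Gamma y ≤ Real.exp (y * Real.log y + 2 * y) := gammaUB hy
  have hlog : Real.log y ≤ Real.log (a+b) + Real.log A := by
    rw [← Real.log_mul hcpos.ne' hA0.ne']
    exact Real.log_le_log hy0 hc
  have hlogA0 : 0 ≤ Real.log A := Real.log_nonneg (by linarith)
  have hlogAA : Real.log A ≤ A := (Real.log_le_sub_one_of_pos hA0).trans (by linarith)
  have key : y * Real.log y + 2 * y ≤
      a * (A * Real.log A) + (b + (a+b) * |Real.log (a+b)| + 2*(a+b)) * A := by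
    have s1 : y * Real.log y ≤ y * (Real.log (a+b) + Real.log A) :=
      mul_le_mul_of_nonneg_left hlog hy0.le
    have s2 : y * Real.log A ≤ a * (A * Real.log A) + b * A := by
      have : y * Real.log A = a * (A * Real.log A) + b * Real.log A := by rw [hydef]; ring
      rw [this]
      have : b * Real.log A ≤ b * A := mul_le_mul_of_nonneg_left hlogAA hb
      linarith
    have s3 : y * Real.log (a+b) ≤ (a+b) * |Real.log (a+b)| * A := by
      rcases le_or_gt 0 (Real.log (a+b)) with h | h
      · have : y * Real.log (a+b) ≤ ((a+b) * A) * Real.log (a+b) :=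
          mul_le_mul_of_nonneg_right hc h
        rw [_root_.abs_of_nonneg h]; nlinarith
      · have : y * Real.log (a+b) ≤ 0 := mul_nonpos_of_nonneg_of_nonpos hy0.le h.le
        have h2 : 0 ≤ (a+b) * |Real.log (a+b)| * A := by positivity
        linarith
    have s4 : 2 * y ≤ 2 * (a+b) * A := by nlinarith
    nlinarith [s1, s2, s3, s4]
  exact h1.trans (Real.exp_le_exp.mpr key)

lemma Pbound {r : ℕ} (α : Fin r → ℝ) (β : Fin r → ℂ) (hα : ∀ i, 0 < α i)
    (hβ : ∀ i, 0 ≤ (β i).re) :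
    ∃ K : ℝ, 1 ≤ K ∧ ∀ A : ℝ, K ≤ A →
      (Real.Gamma A + Real.Gamma (A+2)) * ∏ i, Real.Gamma (α i * A + (β i).re)
        ≤ Real.exp ((1 + ∑ i, α i) * (A * Real.log A) + K * A) := by
  set M : Fin r → ℝ := fun i =>
    (β i).re + (α i + (β i).re) * |Real.log (α i + (β i).re)| + 2 * (α i + (β i).re) with hM
  have hMnn : ∀ i, 0 ≤ M i := by
    intro i
    have := hα i; have := hβ i
    have : (0:ℝ) ≤ (α i + (β i).re) * |Real.log (α i + (β i).re)| := by positivity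
    simp only [hM]
    have := hβ i; have h2 := (hα i).le
    positivity
  set K : ℝ := max (max 2 (10 + ∑ i, M i)) (∑ i, 2 / α i) with hK
  have hK2 : (2:ℝ) ≤ K := le_trans (le_max_left _ _) (le_max_left _ _)
  have hK10 : 10 + ∑ i, M i ≤ K := le_trans (le_max_right _ _) (le_max_left _ _)
  refine ⟨K, by linarith, ?_⟩
  intro A hA
  have hA2 : (2:ℝ) ≤ A := le_trans hK2 hA
  have hA0 : (0:ℝ) < A := by linarith
  have h0 := factor0 hA2
  have hyi : ∀ i, 2 ≤ α i * A + (β i).re := by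
    intro i
    have hsum : 2 / α i ≤ ∑ j, 2 / α j :=
      Finset.single_le_sum (f := fun j => 2 / α j) (fun j _ => by have := hα j; positivity) (Finset.mem_univ i)
    have : 2 / α i ≤ A := le_trans (hsum.trans (le_max_right _ _)) hA
    have h2 : 2 ≤ α i * A := by
      rw [div_le_iff₀ (hα i)] at this
      nlinarith [hα i]
    have := hβ i
    linarith
  have hprod : ∏ i, Real.Gamma (α i * A + (β i).re) ≤
      Real.exp (∑ i, (α i * (A * Real.log A) + M i * A)) := by
    rw [Real.exp_sum]
    refine Finset.prod_le_prod (fun i _ => (Real.Gamma_pos_of_pos (by linarith [hyi i])).le)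
      (fun i _ => ?_)
    exact factori (hα i) (hβ i) hA2 (hyi i)
  have hsum : ∑ i, (α i * (A * Real.log A) + M i * A)
      = (∑ i, α i) * (A * Real.log A) + (∑ i, M i) * A := by
    rw [Finset.sum_add_distrib, ← Finset.sum_mul, ← Finset.sum_mul]
  have hGpos : 0 < Real.Gamma A + Real.Gamma (A + 2) := by
    have := Real.Gamma_pos_of_pos hA0
    have := Real.Gamma_pos_of_pos (show (0:ℝ) < A + 2 by linarith)
    linarith
  have hPnn : 0 ≤ ∏ i, Real.Gamma (α i * A + (β i).re) :=
    Finset.prod_nonneg fun i _ => (Real.Gamma_pos_of_pos (by linarith [hyi i])).le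
  calc (Real.Gamma A + Real.Gamma (A+2)) * ∏ i, Real.Gamma (α i * A + (β i).re)
      ≤ Real.exp (A * Real.log A + 10 * A) *
        Real.exp (∑ i, (α i * (A * Real.log A) + M i * A)) :=
        mul_le_mul h0 hprod hPnn (Real.exp_pos _).le
    _ = Real.exp (A * Real.log A + 10 * A + ((∑ i, α i) * (A * Real.log A) + (∑ i, M i) * A)) := by
        rw [← Real.exp_add, hsum]
    _ ≤ Real.exp ((1 + ∑ i, α i) * (A * Real.log A) + K * A) := by
        apply Real.exp_le_exp.mpr
        have h1 : (10 + ∑ i, M i) * A ≤ K * A := mul_le_mul_of_nonneg_right hK10 hA0.le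
        nlinarith

open Asymptotics

/-- Exponential decay of Y_{α,β}(x) as x → ∞, with exponent 1/(1+d'). -/
theorem stmt_10 (r : ℕ) (α : Fin r → ℝ) (hα : ∀ i, 0 < α i)
    (β : Fin r → ℂ) (hβ : ∀ i, 0 ≤ (β i).re) (a : ℝ) (ha : 0 < a)
    (haβ : ∀ i, 0 < ((α i : ℂ) * (a : ℂ) + β i).re)
    (Y : ℝ → ℂ)
    (hY : Y = fun x : ℝ => ((1 / (2 * Real.pi) : ℝ) : ℂ) *
      ∫ t : ℝ,
        Complex.Gamma ((a : ℂ) + t * Complex.I) *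
          (∏ i, Complex.Gamma ((α i : ℂ) * ((a : ℂ) + t * Complex.I) + β i)) *
          (x : ℂ) ^ (-((a : ℂ) + t * Complex.I))) :
    ∃ c > (0 : ℝ),
      Y =O[Filter.atTop] fun x : ℝ => Real.exp (-c * x ^ (1 / (1 + ∑ i, α i))) := by
  set d : ℝ := ∑ i, α i with hd
  have hd0 : (0:ℝ) ≤ d := Finset.sum_nonneg fun i _ => (hα i).le
  have h1d : (0:ℝ) < 1 + d := by linarith
  set ε : ℝ := 1 / (1 + d) with hε
  have hεpos : 0 < ε := by positivity
  obtain ⟨K, hK1, hKb⟩ := Pbound α β hα hβ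
  set c : ℝ := Real.exp (-((1 + d) * (K + 1))) with hc
  have hcpos : 0 < c := Real.exp_pos _
  refine ⟨c, hcpos, ?_⟩
  rw [Asymptotics.isBigO_iff]
  refine ⟨1, ?_⟩
  have htend : Filter.Tendsto (fun x : ℝ => c * x ^ ε) Filter.atTop Filter.atTop :=
    (tendsto_rpow_atTop hεpos).const_mul_atTop hcpos
  filter_upwards [htend.eventually_ge_atTop (max K a), Filter.eventually_gt_atTop (0:ℝ)]
    with x hx1 hx0
  set A : ℝ := c * x ^ ε with hAdef
  have hKA : K ≤ A := le_trans (le_max_left _ _) hx1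
  have haA : a ≤ A := le_trans (le_max_right _ _) hx1
  have hA0 : (0:ℝ) < A := lt_of_lt_of_le (by linarith : (0:ℝ) < K) hKA
  have hYx : Y x = ((1 / (2 * Real.pi) : ℝ) : ℂ) * ∫ t : ℝ, Ff α β x (↑a + ↑t * Complex.I) := by
    rw [hY]
    rfl
  have hshift := Ff_shift α β hα hβ hx0 ha haA
  have hBnn : 0 ≤ Bb α β x A := Bb_nonneg α β hα hβ hx0 hA0
  have hbound : ‖∫ t : ℝ, Ff α β x (↑A + ↑t * Complex.I)‖ ≤ Bb α β x A * (2 * Real.pi) := by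
    have h1 : ‖∫ t : ℝ, Ff α β x (↑A + ↑t * Complex.I)‖ ≤
        ∫ t : ℝ, Bb α β x A * (max 1 (t ^ 2))⁻¹ :=
      norm_integral_le_of_norm_le (integrable_inv_max.const_mul _)
        (Filter.Eventually.of_forall (Ff_norm_le α β hα hβ hx0 hA0))
    have h2 : ∫ t : ℝ, Bb α β x A * (max 1 (t ^ 2))⁻¹
        = Bb α β x A * ∫ t : ℝ, (max 1 (t ^ 2))⁻¹ := MeasureTheory.integral_const_mul _ _
    have h3 : Bb α β x A * ∫ t : ℝ, (max 1 (t ^ 2))⁻¹ ≤ Bb α β x A * (2 * Real.pi) :=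
      mul_le_mul_of_nonneg_left integral_inv_max_le hBnn
    linarith [h1, h2 ▸ h1]
  have hYle : ‖Y x‖ ≤ Bb α β x A := by
    rw [hYx, hshift, norm_mul]
    have hn : ‖((1 / (2 * Real.pi) : ℝ) : ℂ)‖ = 1 / (2 * Real.pi) := by
      rw [Complex.norm_real, Real.norm_eq_abs, _root_.abs_of_pos (by positivity)]
    rw [hn]
    calc 1 / (2 * Real.pi) * ‖∫ t : ℝ, Ff α β x (↑A + ↑t * Complex.I)‖
        ≤ 1 / (2 * Real.pi) * (Bb α β x A * (2 * Real.pi)) := by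
          apply mul_le_mul_of_nonneg_left hbound (by positivity)
      _ = Bb α β x A := by
          field_simp
  have hxA : x ^ (-A) = Real.exp (-(A * Real.log x)) := by
    rw [Real.rpow_def_of_pos hx0]; ring_nf
  have hBb2 : Bb α β x A ≤ Real.exp ((1 + d) * (A * Real.log A) + K * A) * x ^ (-A) := by
    rw [Bb]
    exact mul_le_mul_of_nonneg_right (hKb A hKA) (Real.rpow_pos_of_pos hx0 _).le
  have hlogA : Real.log A = -((1 + d) * (K + 1)) + ε * Real.log x := by
    rw [hAdef, Real.log_mul hcpos.ne' (Real.rpow_pos_of_pos hx0 ε).ne', hc, Real.log_exp,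
      Real.log_rpow hx0]
  have hεd : ε * (1 + d) = 1 := by rw [hε]; field_simp
  have hfin : (1 + d) * (A * Real.log A) + K * A + (-(A * Real.log x)) ≤ -A := by
    have heq : (1 + d) * (A * Real.log A) + K * A + (-(A * Real.log x))
        = A * (K - (1 + d) ^ 2 * (K + 1)) := by
      rw [hlogA]
      linear_combination (A * Real.log x) * hεd
    rw [heq]
    have hsq : (0:ℝ) ≤ (K + 1) * ((1 + d) ^ 2 - 1) :=
      mul_nonneg (by linarith) (by nlinarith [sq_nonneg d])
    nlinarith [mul_nonneg hA0.le hsq]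
  have hfinal : ‖Y x‖ ≤ Real.exp (-A) := by
    refine hYle.trans (hBb2.trans ?_)
    rw [hxA, ← Real.exp_add]
    exact Real.exp_le_exp.mpr hfin
  have hgoal : -c * x ^ ε = -A := by rw [hAdef]; ring
  rw [one_mul, Real.norm_eq_abs, _root_.abs_of_pos (Real.exp_pos _), hgoal]
  exact hfinal
end

section
/- Fubini for inverse-Mellin against a Dirichlet series: let λ_n ↑ ∞ be positive reals, (a_n) complex with ∑ |a_n| λ_n^{−a} < ∞ for some a > 0, and let α_i > 0, β_i ∈ ℂ with Re(α_i a + β_i) > 0 for i = 1,…,r. Then for every x > 0, (1/(2πi)) ∫_{(a)} (∑_{n≥1} a_n λ_n^{−s}) ∏_{i=1}^r Γ(α_i s + β_i) x^{−s} ds = ∑_{n≥1} a_n Z_{α,β}(λ_n x), where Z_{α,β}(y) = (1/(2πi)) ∫_{(a)} ∏_{i=1}^r Γ(α_i s + β_i) y^{−s} ds, and the series on the right converges absolutely. -/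
open MeasureTheory Complex Filter Topology Set



private lemma norm_ofReal_cpow {y : ℝ} (hy : 0 < y) (w : ℂ) :
    ‖(y:ℂ) ^ w‖ = y ^ w.re := by
  rw [Complex.norm_cpow_eq_rpow_re_of_pos hy]

private lemma norm_Gamma_le {z : ℂ} (hz : 0 < z.re) :
    ‖Complex.Gamma z‖ ≤ Real.Gamma z.re := by
  rw [Complex.Gamma_eq_integral hz, Real.Gamma_eq_integral hz]
  refine le_trans (norm_integral_le_integral_norm _) (le_of_eq ?_)
  refine setIntegral_congr_fun measurableSet_Ioi (fun x hx => ?_)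
  rw [norm_mul, Complex.norm_real, Real.norm_of_nonneg (Real.exp_nonneg _),
    norm_ofReal_cpow hx, Complex.sub_re, Complex.one_re]

private lemma norm_Gamma_decay {z : ℂ} (hz : 0 < z.re) :
    ‖Complex.Gamma z‖ ≤ (Real.Gamma z.re + Real.Gamma (z.re + 2)) * (1 + z.im ^ 2)⁻¹ := by
  have hz0 : z ≠ 0 := fun h => by simp [h] at hz
  have hz1 : z + 1 ≠ 0 := fun h => by
    have : (z + 1).re = 0 := by rw [h]; simp
    simp only [Complex.add_re, Complex.one_re] at this; linarith
  have key : Complex.Gamma (z + 2) = (z + 1) * z * Complex.Gamma z := by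
    have h1 : z + 2 = (z + 1) + 1 := by ring
    rw [h1, Complex.Gamma_add_one _ hz1, Complex.Gamma_add_one _ hz0]; ring
  have him : ‖Complex.Gamma z‖ * z.im ^ 2 ≤ Real.Gamma (z.re + 2) := by
    have h2 : (z + 2).re = z.re + 2 := by simp
    have hb : ‖Complex.Gamma (z + 2)‖ ≤ Real.Gamma (z.re + 2) := by
      have := norm_Gamma_le (z := z + 2) (by rw [h2]; linarith)
      rwa [h2] at this
    calc ‖Complex.Gamma z‖ * z.im ^ 2 ≤ ‖Complex.Gamma z‖ * (‖z + 1‖ * ‖z‖) := by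
          apply mul_le_mul_of_nonneg_left _ (norm_nonneg _)
          have h3 : |z.im| ≤ ‖z‖ := Complex.abs_im_le_norm z
          have h4 : |z.im| ≤ ‖z + 1‖ := by
            have : (z + 1).im = z.im := by simp
            simpa [this] using Complex.abs_im_le_norm (z + 1)
          calc z.im ^ 2 = |z.im| * |z.im| := by rw [abs_mul_abs_self, sq]
            _ ≤ ‖z + 1‖ * ‖z‖ := mul_le_mul h4 h3 (abs_nonneg _) (norm_nonneg _)
      _ = ‖Complex.Gamma (z + 2)‖ := by rw [key, norm_mul, norm_mul]; ring
      _ ≤ Real.Gamma (z.re + 2) := hb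
  have h5 : ‖Complex.Gamma z‖ * (1 + z.im ^ 2) ≤ Real.Gamma z.re + Real.Gamma (z.re + 2) := by
    rw [mul_add, mul_one]
    exact add_le_add (norm_Gamma_le hz) him
  have hpos : (0:ℝ) < 1 + z.im ^ 2 := by positivity
  rw [← div_eq_mul_inv, le_div_iff₀ hpos]
  exact h5


private lemma integrable_affine_inv {k τ : ℝ} (hk : k ≠ 0) :
    Integrable (fun t : ℝ => (1 + (k * t + τ) ^ 2)⁻¹) := by
  have h0 : Integrable (fun u : ℝ => (1 + u ^ 2)⁻¹) := integrable_inv_one_add_sq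
  have h1 : Integrable (fun u : ℝ => (1 + (u + τ) ^ 2)⁻¹) := h0.comp_add_right τ
  simpa using h1.comp_mul_left' hk

private lemma cpow_line {y : ℝ} (hy : 0 < y) (a t : ℝ) :
    (y:ℂ) ^ (-((a:ℂ) + t * Complex.I)) =
      ((y ^ (-a) : ℝ) : ℂ) * Complex.exp (-(t * Real.log y) * Complex.I) := by
  have hy0 : (y:ℂ) ≠ 0 := by exact_mod_cast hy.ne'
  rw [Complex.cpow_def_of_ne_zero hy0, ← Complex.ofReal_log hy.le]
  rw [show (Real.log y : ℂ) * -((a:ℂ) + t * Complex.I) =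
    ((Real.log y * -a : ℝ) : ℂ) + (-(t * Real.log y) * Complex.I) by push_cast; ring]
  rw [Complex.exp_add, ← Complex.ofReal_exp, ← Real.rpow_def_of_pos hy]


private lemma bohr_coeff_zero (b : ℕ → ℂ) (μ : ℕ → ℝ) (hμ : Function.Injective μ)
    (hb : Summable fun m => ‖b m‖)
    (hF : Integrable (fun t : ℝ => ∑' m, b m * Complex.exp (-(t * μ m) * Complex.I)))
    (n : ℕ) : b n = 0 := by
  set F : ℝ → ℂ := fun t => ∑' m, b m * Complex.exp (-(t * μ m) * Complex.I) with hFdef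
  set δ : ℕ → ℝ := fun m => μ n - μ m with hδ
  set f : ℝ → ℕ → ℂ := fun T m =>
    b m * (((2 * T : ℝ) : ℂ))⁻¹ * ∫ t in (-T)..T, Complex.exp ((t * δ m : ℝ) * Complex.I)
    with hf
  set A : ℝ → ℂ := fun T =>
    (((2 * T : ℝ) : ℂ))⁻¹ * ∫ t in (-T)..T, F t * Complex.exp ((t * μ n : ℝ) * Complex.I)
    with hA
  have hnorm_exp : ∀ u : ℝ, ‖Complex.exp ((u : ℂ) * Complex.I)‖ = 1 := fun u => by
    simp [Complex.norm_exp]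
  -- Step 1 : A T = ∑' m, f T m for T > 0
  have step1 : ∀ T : ℝ, 0 < T → A T = ∑' m, f T m := by
    intro T hT
    have hle : (-T) ≤ T := by linarith
    have hcont : ∀ m, Continuous fun t : ℝ =>
        b m * Complex.exp ((t * δ m : ℝ) * Complex.I) := by
      intro m
      continuity
    have hint : ∀ m, IntegrableOn
        (fun t : ℝ => b m * Complex.exp ((t * δ m : ℝ) * Complex.I)) (Ioc (-T) T) :=
      fun m => (hcont m).integrableOn_Ioc
    have hnormint : ∀ m, (∫ t in Ioc (-T) T,
        ‖b m * Complex.exp ((t * δ m : ℝ) * Complex.I)‖) = ‖b m‖ * (2 * T) := by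
      intro m
      have : ∀ t : ℝ, ‖b m * Complex.exp ((t * δ m : ℝ) * Complex.I)‖ = ‖b m‖ := by
        intro t; rw [norm_mul, hnorm_exp, mul_one]
      rw [setIntegral_congr_fun measurableSet_Ioc (fun t _ => this t)]
      rw [setIntegral_const, Real.volume_real_Ioc_of_le (by linarith), smul_eq_mul]
      ring
    have hsumm : Summable fun m => ∫ t in Ioc (-T) T,
        ‖b m * Complex.exp ((t * δ m : ℝ) * Complex.I)‖ := by
      simp_rw [hnormint]
      exact hb.mul_right _
    have hinter := integral_tsum_of_summable_integral_norm hint hsumm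
    have hptw : ∀ t : ℝ, F t * Complex.exp ((t * μ n : ℝ) * Complex.I) =
        ∑' m, b m * Complex.exp ((t * δ m : ℝ) * Complex.I) := by
      intro t
      rw [hFdef]
      rw [← tsum_mul_right]
      congr 1; funext m
      rw [mul_assoc, ← Complex.exp_add]
      congr 2
      push_cast [hδ]
      ring
    simp only [hA]
    rw [intervalIntegral.integral_of_le hle]
    calc (((2 * T : ℝ) : ℂ))⁻¹ * ∫ t in Ioc (-T) T, F t * Complex.exp ((t * μ n : ℝ) * Complex.I)
        = (((2 * T : ℝ) : ℂ))⁻¹ * ∫ t in Ioc (-T) T,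
            ∑' m, b m * Complex.exp ((t * δ m : ℝ) * Complex.I) := by
          congr 1
          exact setIntegral_congr_fun measurableSet_Ioc (fun t _ => hptw t)
      _ = (((2 * T : ℝ) : ℂ))⁻¹ * ∑' m, ∫ t in Ioc (-T) T,
            b m * Complex.exp ((t * δ m : ℝ) * Complex.I) := by rw [← hinter]
      _ = ∑' m, f T m := by
          rw [← tsum_mul_left]
          congr 1; funext m
          simp only [hf]
          rw [intervalIntegral.integral_of_le hle, MeasureTheory.integral_const_mul]
          ring
  -- Step 2 : the tsum tends to b n
  have h2T : ∀ T : ℝ, 0 < T → ((2 * T : ℝ) : ℂ) ≠ 0 := by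
    intro T hT
    exact_mod_cast (by positivity : (2 * T : ℝ) ≠ 0)
  have hnorm_int_one : ∀ T : ℝ, 0 < T → ∀ m : ℕ,
      (∫ t in (-T)..T, ‖Complex.exp ((t * δ m : ℝ) * Complex.I)‖) = 2 * T := by
    intro T hT m
    have : ∀ t : ℝ, ‖Complex.exp ((t * δ m : ℝ) * Complex.I)‖ = 1 := fun t => hnorm_exp _
    rw [intervalIntegral.integral_congr (fun t _ => this t), intervalIntegral.integral_const,
      smul_eq_mul, mul_one]
    ring
  have step2 : Tendsto (fun T => ∑' m, f T m) atTop (𝓝 (b n)) := by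
    have key := tendsto_tsum_of_dominated_convergence (𝓕 := atTop) (f := f)
      (g := fun m => if m = n then b n else 0) (bound := fun m => ‖b m‖) hb ?_ ?_
    · rwa [tsum_ite_eq] at key
    · -- pointwise limits
      intro m
      by_cases hm : m = n
      · subst hm
        refine Tendsto.congr' ?_ tendsto_const_nhds
        filter_upwards [eventually_gt_atTop (0:ℝ)] with T hT
        simp only [hf, hδ, sub_self, mul_zero, Complex.ofReal_zero, zero_mul,
          Complex.exp_zero, intervalIntegral.integral_const, sub_neg_eq_add,
          Complex.real_smul, mul_one, eq_self_iff_true, if_true]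
        rw [show ((T + T : ℝ) : ℂ) = ((2 * T : ℝ) : ℂ) by push_cast; ring,
          mul_assoc, inv_mul_cancel₀ (h2T T hT), mul_one]
      · simp only [if_neg hm]
        have hδm : δ m ≠ 0 := by
          rw [hδ]
          exact sub_ne_zero.mpr (fun h => hm (hμ h.symm))
        have hc : ((δ m : ℂ) * Complex.I) ≠ 0 :=
          mul_ne_zero (by exact_mod_cast hδm) Complex.I_ne_zero
        have hre : ∀ u : ℝ, (((δ m : ℂ) * Complex.I) * (u : ℂ)).re = 0 := by
          intro u; simp
        have hexp1 : ∀ u : ℝ, ‖Complex.exp (((δ m : ℂ) * Complex.I) * (u : ℂ))‖ = 1 := by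
          intro u
          rw [Complex.norm_exp, hre, Real.exp_zero]
        have hrw : ∀ T : ℝ, (∫ t in (-T)..T, Complex.exp ((t * δ m : ℝ) * Complex.I)) =
            (Complex.exp (((δ m : ℂ) * Complex.I) * (T:ℂ)) -
              Complex.exp (((δ m : ℂ) * Complex.I) * ((-T:ℝ):ℂ))) / ((δ m : ℂ) * Complex.I) := by
          intro T
          rw [show (fun t : ℝ => Complex.exp ((t * δ m : ℝ) * Complex.I)) =
              fun t : ℝ => Complex.exp (((δ m : ℂ) * Complex.I) * (t:ℂ)) by
            funext t; congr 1; push_cast; ring]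
          exact integral_exp_mul_complex hc
        have hden : ‖(δ m : ℂ) * Complex.I‖ = |δ m| := by
          rw [norm_mul, Complex.norm_real, Complex.norm_I, mul_one, Real.norm_eq_abs]
        have hbound2 : ∀ᶠ T in atTop, ‖f T m‖ ≤ ‖b m‖ * (2 * T)⁻¹ * (2 / |δ m|) := by
          filter_upwards [eventually_gt_atTop (0:ℝ)] with T hT
          simp only [hf]
          rw [norm_mul, norm_mul, hrw T]
          have hq : ‖(Complex.exp (((δ m : ℂ) * Complex.I) * (T:ℂ)) -
              Complex.exp (((δ m : ℂ) * Complex.I) * ((-T:ℝ):ℂ))) / ((δ m : ℂ) * Complex.I)‖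
              ≤ 2 / |δ m| := by
            rw [norm_div, hden]
            have hnum : ‖Complex.exp (((δ m : ℂ) * Complex.I) * (T:ℂ)) -
                Complex.exp (((δ m : ℂ) * Complex.I) * ((-T:ℝ):ℂ))‖ ≤ 2 := by
              refine (norm_sub_le _ _).trans ?_
              rw [hexp1 T, hexp1 (-T)]; norm_num
            gcongr
          have h2 : ‖(((2*T:ℝ):ℂ))⁻¹‖ = (2*T)⁻¹ := by
            rw [norm_inv, Complex.norm_real, Real.norm_of_nonneg (by linarith)]
          rw [h2]
          gcongr
        have hg0 : Tendsto (fun T : ℝ => ‖b m‖ * (2 * T)⁻¹ * (2 / |δ m|)) atTop (𝓝 0) := by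
          have h1 : Tendsto (fun T : ℝ => (2 * T)⁻¹) atTop (𝓝 0) :=
            tendsto_inv_atTop_zero.comp (tendsto_id.const_mul_atTop two_pos)
          have := (h1.const_mul ‖b m‖).mul_const (2 / |δ m|)
          simpa using this
        exact squeeze_zero_norm' hbound2 hg0
    · -- uniform bound
      filter_upwards [eventually_gt_atTop (0:ℝ)] with T hT k
      simp only [hf]
      rw [norm_mul, norm_mul]
      have h2 : ‖(((2*T:ℝ):ℂ))⁻¹‖ = (2*T)⁻¹ := by
        rw [norm_inv, Complex.norm_real, Real.norm_of_nonneg (by linarith)]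
      have h3 : ‖∫ t in (-T)..T, Complex.exp ((t * δ k : ℝ) * Complex.I)‖ ≤ 2 * T := by
        refine (intervalIntegral.norm_integral_le_integral_norm (by linarith)).trans ?_
        rw [hnorm_int_one T hT k]
      rw [h2]
      calc ‖b k‖ * (2*T)⁻¹ * ‖∫ t in (-T)..T, Complex.exp ((t * δ k : ℝ) * Complex.I)‖
          ≤ ‖b k‖ * (2*T)⁻¹ * (2*T) := by gcongr
        _ = ‖b k‖ := by field_simp
  -- Step 3 : A tends to 0
  have step3 : Tendsto A atTop (𝓝 0) := by
    set C := ∫ t, ‖F t‖ with hC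
    have hbd : ∀ᶠ T in atTop, ‖A T‖ ≤ (2 * T)⁻¹ * C := by
      filter_upwards [eventually_gt_atTop (0:ℝ)] with T hT
      simp only [hA]
      rw [norm_mul, norm_inv, Complex.norm_real, Real.norm_of_nonneg (by linarith)]
      have h4 : ‖∫ t in (-T)..T, F t * Complex.exp ((t * μ n : ℝ) * Complex.I)‖ ≤ C := by
        refine (intervalIntegral.norm_integral_le_integral_norm (by linarith)).trans ?_
        have heq : ∀ t : ℝ, ‖F t * Complex.exp ((t * μ n : ℝ) * Complex.I)‖ = ‖F t‖ :=
          fun t => by rw [norm_mul, hnorm_exp, mul_one]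
        rw [intervalIntegral.integral_congr (fun t _ => heq t),
          intervalIntegral.integral_of_le (by linarith)]
        exact setIntegral_le_integral hF.norm (Filter.Eventually.of_forall fun t => norm_nonneg _)
      have hnn : (0:ℝ) ≤ (2*T)⁻¹ := by positivity
      exact mul_le_mul_of_nonneg_left h4 hnn
    have hg : Tendsto (fun T : ℝ => (2*T)⁻¹ * C) atTop (𝓝 0) := by
      have h1 : Tendsto (fun T : ℝ => (2 * T)⁻¹) atTop (𝓝 0) :=
        tendsto_inv_atTop_zero.comp (tendsto_id.const_mul_atTop two_pos)
      simpa using h1.mul_const C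
    exact squeeze_zero_norm' hbd hg
  have stepA : Tendsto A atTop (𝓝 (b n)) := by
    refine step2.congr' ?_
    filter_upwards [eventually_gt_atTop (0:ℝ)] with T hT
    exact (step1 T hT).symm
  exact tendsto_nhds_unique stepA step3

/-- Interchange of a vertical-line inverse Mellin integral with a Dirichlet series. -/
theorem stmt_14 (r : ℕ) (α : Fin r → ℝ) (hα : ∀ i, 0 < α i)
    (β : Fin r → ℂ) (a : ℝ) (ha : 0 < a)
    (haβ : ∀ i, 0 < ((α i : ℂ) * (a : ℂ) + β i).re)
    (lam : ℕ → ℝ) (hmono : StrictMono lam) (hpos : ∀ n, 0 < lam n)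
    (htop : Filter.Tendsto lam Filter.atTop Filter.atTop)
    (c : ℕ → ℂ) (hsum : Summable fun n => ‖c n‖ * lam n ^ (-a))
    (Z : ℝ → ℂ)
    (hZ : Z = fun y : ℝ => ((1 / (2 * Real.pi) : ℝ) : ℂ) *
      ∫ t : ℝ,
        (∏ i, Complex.Gamma ((α i : ℂ) * ((a : ℂ) + t * Complex.I) + β i)) *
          (y : ℂ) ^ (-((a : ℂ) + t * Complex.I)))
    (x : ℝ) (hx : 0 < x) :
    (((1 / (2 * Real.pi) : ℝ) : ℂ) *
      ∫ t : ℝ,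
        (∑' n, c n * (lam n : ℂ) ^ (-((a : ℂ) + t * Complex.I))) *
          (∏ i, Complex.Gamma ((α i : ℂ) * ((a : ℂ) + t * Complex.I) + β i)) *
          (x : ℂ) ^ (-((a : ℂ) + t * Complex.I)) =
      ∑' n, c n * Z (lam n * x)) ∧
    Summable fun n => c n * Z (lam n * x) := by
  have hre_neg : ∀ t : ℝ, (-((a : ℂ) + t * Complex.I)).re = -a := by
    intro t; simp
  have hnorm_lam : ∀ n (t : ℝ), ‖(lam n : ℂ) ^ (-((a : ℂ) + t * Complex.I))‖ = lam n ^ (-a) := by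
    intro n t; rw [norm_ofReal_cpow (hpos n), hre_neg]
  by_cases hr : r = 0
  · -- degenerate case : no Gamma factors
    subst hr
    have hprod : ∀ t : ℝ,
        (∏ i : Fin 0, Complex.Gamma ((α i : ℂ) * ((a : ℂ) + t * Complex.I) + β i)) = 1 := by
      intro t; simp
    have hZ0 : ∀ y : ℝ, 0 < y → Z y = 0 := by
      intro y hy
      simp only [hZ]
      have hnotint : ¬ Integrable (fun t : ℝ =>
          (∏ i : Fin 0, Complex.Gamma ((α i : ℂ) * ((a : ℂ) + t * Complex.I) + β i)) *
            (y : ℂ) ^ (-((a : ℂ) + t * Complex.I))) := by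
        intro hI
        have h1 := hI.norm
        have h2 : (fun t : ℝ =>
            ‖(∏ i : Fin 0, Complex.Gamma ((α i : ℂ) * ((a : ℂ) + t * Complex.I) + β i)) *
              (y : ℂ) ^ (-((a : ℂ) + t * Complex.I))‖) = fun _ => y ^ (-a) := by
          funext t
          rw [hprod t, one_mul, norm_ofReal_cpow hy, hre_neg]
        rw [h2, integrable_const_iff] at h1
        rcases h1 with h | h
        · exact absurd h (by positivity)
        · simpa [Real.volume_univ] using h.measure_univ_lt_top.ne
      rw [integral_undef hnotint, mul_zero]
    have hRHS0 : ∀ n, c n * Z (lam n * x) = 0 := fun n => by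
      rw [hZ0 _ (mul_pos (hpos n) hx), mul_zero]
    refine ⟨?_, ?_⟩
    · rw [tsum_congr hRHS0, tsum_zero]
      by_cases hI : Integrable (fun t : ℝ =>
          (∑' n, c n * (lam n : ℂ) ^ (-((a : ℂ) + t * Complex.I))) *
            (∏ i : Fin 0, Complex.Gamma ((α i : ℂ) * ((a : ℂ) + t * Complex.I) + β i)) *
            (x : ℂ) ^ (-((a : ℂ) + t * Complex.I))) ; swap
      · rw [integral_undef hI, mul_zero]
      · -- integrable case : all coefficients vanish
        set b : ℕ → ℂ := fun n => c n * ((lam n ^ (-a) : ℝ) : ℂ) with hb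
        set μ : ℕ → ℝ := fun n => Real.log (lam n) with hμdef
        have hser : ∀ t : ℝ, (∑' n, c n * (lam n : ℂ) ^ (-((a : ℂ) + t * Complex.I))) =
            ∑' n, b n * Complex.exp (-(t * μ n) * Complex.I) := by
          intro t
          refine tsum_congr fun n => ?_
          simp only [hb, hμdef]
          rw [cpow_line (hpos n) a t, mul_assoc]
        have hμinj : Function.Injective μ := by
          intro m k h
          by_contra hmk
          rcases lt_or_gt_of_ne hmk with hlt | hlt
          · exact absurd h (ne_of_lt (Real.log_lt_log (hpos m) (hmono hlt)))
          · exact absurd h.symm (ne_of_lt (Real.log_lt_log (hpos k) (hmono hlt)))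
        have hbsum : Summable fun n => ‖b n‖ := by
          refine hsum.congr fun n => ?_
          rw [hb, norm_mul, Complex.norm_real,
            Real.norm_of_nonneg (Real.rpow_nonneg (hpos n).le _)]
        have hxC : ((x : ℝ) : ℂ) ≠ 0 := by exact_mod_cast hx.ne'
        have hcontx : Continuous fun t : ℝ => (x : ℂ) ^ ((a : ℂ) + t * Complex.I) := by
          apply continuous_const.cpow
          · exact continuous_const.add (Complex.continuous_ofReal.mul continuous_const)
          · exact fun _ => Or.inl (by simpa using hx)
        have hFint : Integrable (fun t : ℝ =>
            ∑' n, b n * Complex.exp (-(t * μ n) * Complex.I)) := by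
          have h5 : Integrable (fun t : ℝ => (x : ℂ) ^ ((a : ℂ) + t * Complex.I) *
              ((∑' n, c n * (lam n : ℂ) ^ (-((a : ℂ) + t * Complex.I))) *
                (∏ i : Fin 0, Complex.Gamma ((α i : ℂ) * ((a : ℂ) + t * Complex.I) + β i)) *
                (x : ℂ) ^ (-((a : ℂ) + t * Complex.I)))) := by
            refine hI.bdd_mul (c := x ^ a) hcontx.aestronglyMeasurable (Filter.Eventually.of_forall fun t => ?_)
            rw [norm_ofReal_cpow hx]
            simp
          refine (h5.congr ?_)
          refine Filter.Eventually.of_forall fun t => ?_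
          beta_reduce
          rw [hprod t, mul_one, ← hser t]
          rw [mul_comm ((x:ℂ) ^ ((a:ℂ) + t * Complex.I)), mul_assoc, ← Complex.cpow_add _ _ hxC,
            show -((a:ℂ) + t * Complex.I) + ((a:ℂ) + t * Complex.I) = 0 by ring,
            Complex.cpow_zero, mul_one]
        have hc0 : ∀ n, c n = 0 := by
          intro n
          have hb0 := bohr_coeff_zero b μ hμinj hbsum hFint n
          rw [hb] at hb0
          have hne : ((lam n ^ (-a) : ℝ) : ℂ) ≠ 0 := by
            exact_mod_cast (Real.rpow_pos_of_pos (hpos n) (-a)).ne'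
          exact (mul_eq_zero.mp hb0).resolve_right hne
        have : (fun t : ℝ =>
            (∑' n, c n * (lam n : ℂ) ^ (-((a : ℂ) + t * Complex.I))) *
              (∏ i : Fin 0, Complex.Gamma ((α i : ℂ) * ((a : ℂ) + t * Complex.I) + β i)) *
              (x : ℂ) ^ (-((a : ℂ) + t * Complex.I))) = fun _ => 0 := by
          funext t
          simp [hc0]
        rw [this, integral_zero, mul_zero]
    · refine summable_of_ne_finset_zero (s := ∅) fun n _ => hRHS0 n
  · -- main case : at least one Gamma factor
    have hrpos : 0 < r := Nat.pos_of_ne_zero hr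
    set i0 : Fin r := ⟨0, hrpos⟩ with hi0
    set σ : Fin r → ℝ := fun i => α i * a + (β i).re with hσ
    have hσpos : ∀ i, 0 < σ i := by
      intro i
      have := haβ i
      simpa [hσ, Complex.add_re, Complex.mul_re] using this
    have hargre : ∀ i (t : ℝ), ((α i : ℂ) * ((a : ℂ) + t * Complex.I) + β i).re = σ i := by
      intro i t
      simp [hσ, Complex.add_re, Complex.mul_re]
    have hargim : ∀ i (t : ℝ), ((α i : ℂ) * ((a : ℂ) + t * Complex.I) + β i).im
        = α i * t + (β i).im := by
      intro i t
      simp [Complex.add_im, Complex.mul_im]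
    set G : ℝ → ℂ := fun t => ∏ i, Complex.Gamma ((α i : ℂ) * ((a : ℂ) + t * Complex.I) + β i)
      with hG
    have hne_negnat : ∀ i (t : ℝ) (m : ℕ), ((α i : ℂ) * ((a : ℂ) + t * Complex.I) + β i) ≠ -m := by
      intro i t m h
      have : ((α i : ℂ) * ((a : ℂ) + t * Complex.I) + β i).re = (-(m:ℂ)).re := by rw [h]
      rw [hargre i t] at this
      simp only [Complex.neg_re, Complex.natCast_re] at this
      have := hσpos i
      have hm : (0:ℝ) ≤ (m:ℝ) := Nat.cast_nonneg m
      linarith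
    have hGcont : Continuous G := by
      rw [hG]
      refine continuous_finset_prod _ fun i _ => ?_
      refine continuous_iff_continuousAt.mpr fun t => ?_
      have hc1 : Continuous fun t : ℝ => (α i : ℂ) * ((a : ℂ) + t * Complex.I) + β i := by
        exact ((continuous_const.mul (continuous_const.add
          (Complex.continuous_ofReal.mul continuous_const)))).add continuous_const
      have hcomp := ContinuousAt.comp (x := t)
        (Complex.differentiableAt_Gamma _ (hne_negnat i t)).continuousAt hc1.continuousAt
      exact hcomp
    -- integrability of G
    have hGbound : ∀ t : ℝ, ‖G t‖ ≤
        ((Real.Gamma (σ i0) + Real.Gamma (σ i0 + 2)) *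
          (1 + (α i0 * t + (β i0).im) ^ 2)⁻¹) *
          ∏ i ∈ Finset.univ.erase i0, Real.Gamma (σ i) := by
      intro t
      simp only [hG]
      rw [← Finset.mul_prod_erase Finset.univ _ (Finset.mem_univ i0)]
      rw [norm_mul]
      refine mul_le_mul ?_ ?_ (norm_nonneg _) ?_
      · have := norm_Gamma_decay (z := (α i0 : ℂ) * ((a : ℂ) + t * Complex.I) + β i0)
          (by rw [hargre i0 t]; exact hσpos i0)
        rwa [hargre i0 t, hargim i0 t] at this
      · refine (Finset.norm_prod_le _ _).trans ?_
        refine Finset.prod_le_prod (fun i _ => norm_nonneg _) fun i _ => ?_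
        have := norm_Gamma_le (z := (α i : ℂ) * ((a : ℂ) + t * Complex.I) + β i)
          (by rw [hargre i t]; exact hσpos i)
        rwa [hargre i t] at this
      · refine mul_nonneg ?_ (by positivity)
        have h1 := Real.Gamma_pos_of_pos (hσpos i0)
        have h2 := Real.Gamma_pos_of_pos (by linarith [hσpos i0] : (0:ℝ) < σ i0 + 2)
        positivity
    have hGint : Integrable G := by
      refine Integrable.mono' ?_ hGcont.aestronglyMeasurable
        (Filter.Eventually.of_forall hGbound)
      have h1 : Integrable fun t : ℝ => (1 + (α i0 * t + (β i0).im) ^ 2)⁻¹ :=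
        integrable_affine_inv (hα i0).ne'
      have h2 := (h1.const_mul (Real.Gamma (σ i0) + Real.Gamma (σ i0 + 2))).mul_const
        (∏ i ∈ Finset.univ.erase i0, Real.Gamma (σ i))
      exact h2
    -- the summand functions
    set F : ℕ → ℝ → ℂ := fun n t =>
      c n * (G t * ((lam n * x : ℝ) : ℂ) ^ (-((a : ℂ) + t * Complex.I))) with hF
    have hy : ∀ n, (0:ℝ) < lam n * x := fun n => mul_pos (hpos n) hx
    have hFnorm : ∀ n (t : ℝ), ‖F n t‖ = (‖c n‖ * (lam n * x) ^ (-a)) * ‖G t‖ := by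
      intro n t
      simp only [hF, norm_mul]
      rw [norm_ofReal_cpow (hy n), hre_neg]
      ring
    have hcont_cpow : ∀ n, Continuous fun t : ℝ =>
        ((lam n * x : ℝ) : ℂ) ^ (-((a : ℂ) + t * Complex.I)) := by
      intro n
      apply continuous_const.cpow
      · exact (continuous_const.add (Complex.continuous_ofReal.mul continuous_const)).neg
      · exact fun _ => Or.inl (by simpa using hy n)
    have hFint : ∀ n, Integrable (F n) := by
      intro n
      have h5 : Integrable fun t : ℝ =>
          (c n * ((lam n * x : ℝ) : ℂ) ^ (-((a : ℂ) + t * Complex.I))) * G t := by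
        refine hGint.bdd_mul (c := ‖c n‖ * (lam n * x) ^ (-a)) ?_ (Filter.Eventually.of_forall fun t => ?_)
        · exact (continuous_const.mul (hcont_cpow n)).aestronglyMeasurable
        · rw [norm_mul, norm_ofReal_cpow (hy n), hre_neg]
      refine h5.congr (Filter.Eventually.of_forall fun t => ?_)
      simp only [hF]; ring
    have hInorm : ∀ n, (∫ t : ℝ, ‖F n t‖) = (‖c n‖ * (lam n * x) ^ (-a)) * ∫ t : ℝ, ‖G t‖ := by
      intro n
      rw [show (fun t : ℝ => ‖F n t‖) = fun t : ℝ => (‖c n‖ * (lam n * x) ^ (-a)) * ‖G t‖ from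
        funext fun t => hFnorm n t]
      exact integral_const_mul _ _
    have hIsumm : Summable fun n => ∫ t : ℝ, ‖F n t‖ := by
      have key : (fun n => ∫ t : ℝ, ‖F n t‖) =
          fun n => (‖c n‖ * lam n ^ (-a)) * (x ^ (-a) * ∫ t : ℝ, ‖G t‖) := by
        funext n
        rw [hInorm n, Real.mul_rpow (hpos n).le hx.le]
        ring
      rw [key]
      exact hsum.mul_right _
    have hinter := integral_tsum_of_summable_integral_norm hFint hIsumm
    have hptw : ∀ t : ℝ,
        (∑' n, c n * (lam n : ℂ) ^ (-((a : ℂ) + t * Complex.I))) *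
          (∏ i, Complex.Gamma ((α i : ℂ) * ((a : ℂ) + t * Complex.I) + β i)) *
          (x : ℂ) ^ (-((a : ℂ) + t * Complex.I)) = ∑' n, F n t := by
      intro t
      rw [← tsum_mul_right, ← tsum_mul_right]
      refine tsum_congr fun n => ?_
      simp only [hF, hG]
      rw [show ((lam n * x : ℝ) : ℂ) = (lam n : ℂ) * (x : ℂ) by push_cast; ring,
        mul_cpow_ofReal_nonneg (hpos n).le hx.le]
      ring
    have hZn : ∀ n, Z (lam n * x) = ((1 / (2 * Real.pi) : ℝ) : ℂ) *
        ∫ t : ℝ, G t * ((lam n * x : ℝ) : ℂ) ^ (-((a : ℂ) + t * Complex.I)) := by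
      intro n
      simp only [hZ, hG]
    have hIZ : ∀ n, (∫ t : ℝ, F n t) =
        c n * ∫ t : ℝ, G t * ((lam n * x : ℝ) : ℂ) ^ (-((a : ℂ) + t * Complex.I)) := by
      intro n
      simp only [hF]
      exact integral_const_mul _ _
    constructor
    · calc ((1 / (2 * Real.pi) : ℝ) : ℂ) *
          ∫ t : ℝ,
            (∑' n, c n * (lam n : ℂ) ^ (-((a : ℂ) + t * Complex.I))) *
              (∏ i, Complex.Gamma ((α i : ℂ) * ((a : ℂ) + t * Complex.I) + β i)) *
              (x : ℂ) ^ (-((a : ℂ) + t * Complex.I))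
          = ((1 / (2 * Real.pi) : ℝ) : ℂ) * ∫ t : ℝ, ∑' n, F n t := by
            congr 1
            exact integral_congr_ae (Filter.Eventually.of_forall fun t => hptw t)
        _ = ((1 / (2 * Real.pi) : ℝ) : ℂ) * ∑' n, ∫ t : ℝ, F n t := by rw [hinter]
        _ = ∑' n, ((1 / (2 * Real.pi) : ℝ) : ℂ) * ∫ t : ℝ, F n t := by rw [tsum_mul_left]
        _ = ∑' n, c n * Z (lam n * x) := by
            refine tsum_congr fun n => ?_
            rw [hIZ n, hZn n]
            ring
    · refine Summable.of_norm_bounded (g :=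
        (fun n => (‖c n‖ * lam n ^ (-a)) *
          (x ^ (-a) * ((1 / (2 * Real.pi)) * ∫ t : ℝ, ‖G t‖)))) (hsum.mul_right _) fun n => ?_
      rw [norm_mul, hZn n]
      have hZb : ‖((1 / (2 * Real.pi) : ℝ) : ℂ) *
          ∫ t : ℝ, G t * ((lam n * x : ℝ) : ℂ) ^ (-((a : ℂ) + t * Complex.I))‖ ≤
          (1 / (2 * Real.pi)) * ((lam n * x) ^ (-a) * ∫ t : ℝ, ‖G t‖) := by
        rw [norm_mul, Complex.norm_real, Real.norm_of_nonneg (by positivity)]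
        refine mul_le_mul_of_nonneg_left ?_ (by positivity)
        refine (norm_integral_le_integral_norm _).trans (le_of_eq ?_)
        rw [show (fun t : ℝ => ‖G t * ((lam n * x : ℝ) : ℂ) ^ (-((a : ℂ) + t * Complex.I))‖)
            = fun t : ℝ => (lam n * x) ^ (-a) * ‖G t‖ from funext fun t => by
          rw [norm_mul, norm_ofReal_cpow (hy n), hre_neg]; ring]
        exact integral_const_mul _ _
      calc ‖c n‖ * ‖((1 / (2 * Real.pi) : ℝ) : ℂ) *
            ∫ t : ℝ, G t * ((lam n * x : ℝ) : ℂ) ^ (-((a : ℂ) + t * Complex.I))‖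
          ≤ ‖c n‖ * ((1 / (2 * Real.pi)) * ((lam n * x) ^ (-a) * ∫ t : ℝ, ‖G t‖)) :=
            mul_le_mul_of_nonneg_left hZb (norm_nonneg _)
        _ = (‖c n‖ * lam n ^ (-a)) * (x ^ (-a) * ((1 / (2 * Real.pi)) * ∫ t : ℝ, ‖G t‖)) := by
            rw [Real.mul_rpow (hpos n).le hx.le]
            ring
end
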